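/- Let V be a finite set, s ∈ V, E ⊆ V × V, k ∈ ℕ, ℓ : E → {0, …, k} a level function, and w_M, W_M : {0, …, k} → ℕ functions with 1 ≤ w_M(i) ≤ W_M(i) for all i. For x ∈ ℕ and level i, let ⌈x⌉_i denote the least natural number that is at least x + w_M(i) and divisible by 1 + W_M(i) − w_M(i). For a weight function w : E → ℕ, let d_w(s, u) denote the minimum total w-weight of a walk in (V, E) from s to u (∞ if u is not reachable from s). Then there exists a weight function w : E → ℕ such that for every edge (u, v) ∈ E whose tail u is reachable from s, w(u, v) = ⌈d_w(s, u)⌉_{ℓ(u,v)} − d_w(s, u); any two weight functions with this property agree on all edges whose tail is reachable from s; and every such edge e satisfies w_M(ℓ(e)) ≤ w(e) ≤ W_M(ℓ(e)). -/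

import Mathlib

variable {V : Type*}

/-- Unweighted walk distance in the digraph with edge relation `E`:
the minimum number of edges of a walk from `u` to `v`, `∞` if none exists. -/
noncomputable def ddist (E : V → V → Prop) (u v : V) : ℕ∞ :=
  sInf { n : ℕ∞ | ∃ l : List V, l.Chain' E ∧ l.head? = some u ∧ l.getLast? = some v ∧
    n = ((l.length - 1 : ℕ) : ℕ∞) }

/-- Weighted walk distance: the minimum total weight of a walk from `u` to `v`. -/
noncomputable def wdist (E : V → V → Prop) (w : V → V → ℕ) (u v : V) : ℕ∞ :=
  sInf { n : ℕ∞ | ∃ l : List V, l.Chain' E ∧ l.head? = some u ∧ l.getLast? = some v ∧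
    n = ((((l.zip l.tail).map fun p => w p.1 p.2).sum : ℕ) : ℕ∞) }

/-- The digraph `H ∖ E(S)`: edges of `E` with neither endpoint in `S`. -/
def edgesAvoiding (E : V → V → Prop) (S : Set V) : V → V → Prop :=
  fun a b => E a b ∧ a ∉ S ∧ b ∉ S

/-- The strongly connected component of `v`: vertices mutually reachable with `v`. -/
def scc (E : V → V → Prop) (v : V) : Set V :=
  {u | Relation.ReflTransGen E u v ∧ Relation.ReflTransGen E v u}

/-- `S` is a `q`-quality separator: every SCC of `H ∖ E(S)` has at most `|V| - q·|S|` vertices. -/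
def QualSep [Fintype V] (E : V → V → Prop) (q : ℝ) (S : Set V) : Prop :=
  ∀ v : V, ((scc (edgesAvoiding E S) v).ncard : ℝ) ≤ (Fintype.card V : ℝ) - q * S.ncard

/-- Edge relation of the induced subdigraph on `C`. -/
def induced (E : V → V → Prop) (C : Set V) : V → V → Prop :=
  fun a b => E a b ∧ a ∈ C ∧ b ∈ C

/-- The (finite) collection of vertex sets of the SCCs of the digraph. -/
noncomputable def sccs [Fintype V] (E : V → V → Prop) : Finset (Set V) :=
  letI := Classical.decEq (Set V)
  Finset.image (fun v => scc E v) Finset.univ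

/-- The least natural number that is at least `x + w` and divisible by `1 + W - w`. -/
noncomputable def ceilTo (w W x : ℕ) : ℕ := sInf {n : ℕ | x + w ≤ n ∧ (1 + W - w) ∣ n}

/-- `w` is a flexible weight function: on every edge `(u, v)` whose tail `u` is reachable
from `s`, it satisfies `w (u, v) = ⌈d_w(s, u)⌉_{ℓ (u, v)} - d_w(s, u)`. -/
def FlexWeight {V : Type*} (s : V) (E : Set (V × V)) (ℓ : V × V → ℕ)
    (wM WM : ℕ → ℕ) (w : V × V → ℕ) : Prop :=
  ∀ e ∈ E, Relation.ReflTransGen (fun a b => (a, b) ∈ E) s e.1 →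
    ∃ m : ℕ, wdist (fun a b => (a, b) ∈ E) (fun a b => w (a, b)) s e.1 = (m : ℕ∞) ∧
      w e = ceilTo (wM (ℓ e)) (WM (ℓ e)) m - m


section Helpers

lemma ceilTo_mem {w W : ℕ} (hw : 1 ≤ w) (hW : w ≤ W) (x : ℕ) :
    x + w ≤ ceilTo w W x ∧ (1 + W - w) ∣ ceilTo w W x := by
  have h : (1 + W - w) * (x + w) ∈ {n : ℕ | x + w ≤ n ∧ (1 + W - w) ∣ n} := by
    refine ⟨?_, dvd_mul_right _ _⟩
    have h1 : 1 ≤ 1 + W - w := by omega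
    nlinarith
  exact Nat.sInf_mem ⟨_, h⟩

lemma ceilTo_le {w W : ℕ} (hw : 1 ≤ w) (hW : w ≤ W) (x : ℕ) :
    ceilTo w W x ≤ x + W := by
  unfold ceilTo
  have hD1 : 1 ≤ 1 + W - w := by omega
  have hdm := Nat.div_add_mod (x + w + (1 + W - w) - 1) (1 + W - w)
  have hml : (x + w + (1 + W - w) - 1) % (1 + W - w) < (1 + W - w) := Nat.mod_lt _ hD1
  have hn : (1 + W - w) * ((x + w + (1 + W - w) - 1) / (1 + W - w)) ∈
      {n : ℕ | x + w ≤ n ∧ (1 + W - w) ∣ n} := ⟨by omega, Dvd.intro _ rfl⟩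
  have := Nat.sInf_le hn
  omega

lemma ceilTo_mono {w W : ℕ} (hw : 1 ≤ w) (hW : w ≤ W) {x y : ℕ} (h : x ≤ y) :
    ceilTo w W x ≤ ceilTo w W y := by
  have := ceilTo_mem hw hW y
  exact Nat.sInf_le ⟨by omega, this.2⟩

def IsWalk (E : V → V → Prop) (u v : V) (l : List V) : Prop :=
  l.Chain' E ∧ l.head? = some u ∧ l.getLast? = some v

lemma isWalk_singleton (E : V → V → Prop) (u : V) : IsWalk E u u [u] :=
  ⟨List.isChain_singleton u, rfl, rfl⟩

lemma isWalk_ne_nil {E : V → V → Prop} {u v : V} {l : List V} (h : IsWalk E u v l) :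
    l ≠ [] := by
  intro hl; rw [hl] at h; exact absurd h.2.1 (by simp)

lemma head?_of_append {l : List V} {c u : V} (hne : l ≠ [])
    (h : (l ++ [c]).head? = some u) : l.head? = some u := by
  rw [List.head?_append] at h
  rcases hx : l.head? with _ | a
  · exact absurd (List.head?_eq_none_iff.mp hx) hne
  · rw [hx] at h; simpa using h

lemma isWalk_append {E : V → V → Prop} {u t : V} {l : List V} (h : IsWalk E u t l)
    {c : V} (hc : E t c) : IsWalk E u c (l ++ [c]) := by
  obtain ⟨h1, h2, h3⟩ := h
  refine ⟨?_, ?_, by simp⟩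
  · rw [List.Chain', List.isChain_append]
    exact ⟨h1, List.isChain_singleton c, fun x hx y hy => by
      rw [h3] at hx; rw [List.head?_cons] at hy
      cases hx; cases hy; exact hc⟩
  · rw [List.head?_append, h2]; rfl

lemma reach_of_walk {E : V → V → Prop} {u v : V} {l : List V} (h : IsWalk E u v l) :
    Relation.ReflTransGen E u v := by
  induction l using List.reverseRecOn generalizing v with
  | nil => exact absurd h (fun h => absurd h.2.1 (by simp))
  | append_singleton l c ih =>
    obtain ⟨h1, h2, h3⟩ := h
    have hc : c = v := by simpa using h3
    subst hc
    rcases eq_or_ne l [] with rfl | hne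
    · simp at h2; rw [h2]
    · obtain ⟨t, ht⟩ : ∃ t, l.getLast? = some t := by
        rcases hx : l.getLast? with _ | a
        · exact absurd (List.getLast?_eq_none_iff.mp hx) hne
        · exact ⟨a, rfl⟩
      rw [List.Chain', List.isChain_append] at h1
      have hEtc : E t c := h1.2.2 t ht c rfl
      exact (ih ⟨h1.1, head?_of_append hne h2, ht⟩).tail hEtc

lemma walk_of_reach {E : V → V → Prop} {u v : V} (h : Relation.ReflTransGen E u v) :
    ∃ l, IsWalk E u v l := by
  induction h with
  | refl => exact ⟨[u], isWalk_singleton E u⟩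
  | tail _ he ih => obtain ⟨l, hl⟩ := ih; exact ⟨_, isWalk_append hl he⟩

lemma walk_decomp {E : V → V → Prop} {u v : V} {l : List V} (h : IsWalk E u v l) :
    (l = [u] ∧ v = u) ∨ ∃ l' t, l = l' ++ [v] ∧ IsWalk E u t l' ∧ E t v := by
  obtain ⟨h1, h2, h3⟩ := h
  rcases List.eq_nil_or_concat' l with rfl | ⟨l', c, rfl⟩
  · exact absurd h2 (by simp)
  have hc : c = v := by simpa using h3
  subst hc
  rcases eq_or_ne l' [] with rfl | hne
  · left; simp at h2; exact ⟨by simp [h2], h2⟩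
  · right
    obtain ⟨t, ht⟩ : ∃ t, l'.getLast? = some t := by
      rcases hx : l'.getLast? with _ | a
      · exact absurd (List.getLast?_eq_none_iff.mp hx) hne
      · exact ⟨a, rfl⟩
    rw [List.Chain', List.isChain_append] at h1
    exact ⟨l', t, rfl, ⟨h1.1, head?_of_append hne h2, ht⟩, h1.2.2 t ht c rfl⟩


lemma zip_tail_append (l : List V) (t c : V) (h : l.getLast? = some t) :
    (l ++ [c]).zip (l ++ [c]).tail = l.zip l.tail ++ [(t, c)] := by
  induction l with
  | nil => exact absurd h (by simp)
  | cons a l ih =>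
    cases l with
    | nil => simp at h; subst h; simp
    | cons b l =>
      have h' : (b :: l).getLast? = some t := by
        rw [List.getLast?_cons_cons] at h; exact h
      have := ih h'
      simp only [List.cons_append, List.tail_cons, List.zip_cons_cons] at this ⊢
      rw [this]

def wsum (w : V → V → ℕ) (l : List V) : ℕ := ((l.zip l.tail).map fun p => w p.1 p.2).sum

def mfold (f : V × V → ℕ → ℕ) (l : List V) : ℕ :=
  (l.zip l.tail).foldl (fun m p => f p m) 0

lemma wsum_append (w : V → V → ℕ) {l : List V} {t : V} (h : l.getLast? = some t) (c : V) :
    wsum w (l ++ [c]) = wsum w l + w t c := by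
  unfold wsum
  rw [zip_tail_append l t c h, List.map_append, List.sum_append]
  simp

lemma mfold_append (f : V × V → ℕ → ℕ) {l : List V} {t : V} (h : l.getLast? = some t) (c : V) :
    mfold f (l ++ [c]) = f (t, c) (mfold f l) := by
  unfold mfold
  rw [zip_tail_append l t c h, List.foldl_append]
  simp

lemma wsum_singleton (w : V → V → ℕ) (u : V) : wsum w [u] = 0 := rfl
lemma mfold_singleton (f : V × V → ℕ → ℕ) (u : V) : mfold f [u] = 0 := rfl


noncomputable def ndist (E : V → V → Prop) (w : V → V → ℕ) (s v : V) : ℕ :=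
  sInf {n : ℕ | ∃ l, IsWalk E s v l ∧ wsum w l = n}

noncomputable def mdist (E : V → V → Prop) (f : V × V → ℕ → ℕ) (s v : V) : ℕ :=
  sInf {n : ℕ | ∃ l, IsWalk E s v l ∧ mfold f l = n}

variable {E : V → V → Prop} {w w' : V → V → ℕ} {f : V × V → ℕ → ℕ} {s v t : V}

lemma ndist_le_wsum {l : List V} (h : IsWalk E s v l) : ndist E w s v ≤ wsum w l :=
  Nat.sInf_le ⟨l, h, rfl⟩

lemma mdist_le_mfold {l : List V} (h : IsWalk E s v l) : mdist E f s v ≤ mfold f l :=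
  Nat.sInf_le ⟨l, h, rfl⟩

lemma exists_walk_ndist (h : Relation.ReflTransGen E s v) :
    ∃ l, IsWalk E s v l ∧ wsum w l = ndist E w s v := by
  obtain ⟨l, hl⟩ := walk_of_reach h
  have hne : {n : ℕ | ∃ l, IsWalk E s v l ∧ wsum w l = n}.Nonempty := ⟨wsum w l, l, hl, rfl⟩
  exact Nat.sInf_mem hne

lemma exists_walk_mdist (h : Relation.ReflTransGen E s v) :
    ∃ l, IsWalk E s v l ∧ mfold f l = mdist E f s v := by
  obtain ⟨l, hl⟩ := walk_of_reach h
  have hne : {n : ℕ | ∃ l, IsWalk E s v l ∧ mfold f l = n}.Nonempty := ⟨mfold f l, l, hl, rfl⟩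
  exact Nat.sInf_mem hne

lemma ndist_self : ndist E w s s = 0 :=
  Nat.le_zero.mp (ndist_le_wsum (isWalk_singleton E s))

lemma mdist_self : mdist E f s s = 0 :=
  Nat.le_zero.mp (mdist_le_mfold (isWalk_singleton E s))

lemma ndist_le_edge (he : E t v) (ht : Relation.ReflTransGen E s t) :
    ndist E w s v ≤ ndist E w s t + w t v := by
  obtain ⟨l, hl, hsum⟩ := exists_walk_ndist (w := w) ht
  have := ndist_le_wsum (w := w) (isWalk_append hl he)
  rwa [wsum_append w hl.2.2, hsum] at this

lemma mdist_le_edge (he : E t v) (ht : Relation.ReflTransGen E s t) :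
    mdist E f s v ≤ f (t, v) (mdist E f s t) := by
  obtain ⟨l, hl, hsum⟩ := exists_walk_mdist (f := f) ht
  have := mdist_le_mfold (f := f) (isWalk_append hl he)
  rwa [mfold_append f hl.2.2, hsum] at this

lemma ndist_decomp (h : Relation.ReflTransGen E s v) (hvs : v ≠ s) :
    ∃ t, E t v ∧ Relation.ReflTransGen E s t ∧
      ndist E w s v = ndist E w s t + w t v := by
  obtain ⟨l, hl, hsum⟩ := exists_walk_ndist (w := w) h
  rcases walk_decomp hl with ⟨_, rfl⟩ | ⟨l', t, rfl, hl', he⟩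
  · exact absurd rfl hvs
  · have ht : Relation.ReflTransGen E s t := reach_of_walk hl'
    have h1 : ndist E w s t ≤ wsum w l' := ndist_le_wsum hl'
    have h2 : ndist E w s v ≤ ndist E w s t + w t v := ndist_le_edge he ht
    have h3 : wsum w (l' ++ [v]) = wsum w l' + w t v := wsum_append w hl'.2.2 v
    exact ⟨t, he, ht, by omega⟩

lemma wdist_eq (h : Relation.ReflTransGen E s v) :
    wdist E w s v = (ndist E w s v : ℕ∞) := by
  apply le_antisymm
  · obtain ⟨l, hl, hsum⟩ := exists_walk_ndist (w := w) h
    exact sInf_le ⟨l, hl.1, hl.2.1, hl.2.2, by rw [← hsum]; rfl⟩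
  · apply le_sInf
    rintro n ⟨l, h1, h2, h3, rfl⟩
    exact_mod_cast ndist_le_wsum (w := w) ⟨h1, h2, h3⟩

section core
variable (hpos : ∀ a b, E a b → ∀ m, m + 1 ≤ f (a, b) m)
  (hmono : ∀ a b, E a b → ∀ m m', m ≤ m' → f (a, b) m ≤ f (a, b) m')

/-- The canonically defined weight function. -/
noncomputable def wcan (E : V → V → Prop) (f : V × V → ℕ → ℕ) (s : V) : V → V → ℕ :=
  fun a b => f (a, b) (mdist E f s a) - mdist E f s a

include hpos in
lemma mdist_le_wsum_wcan : ∀ {l : List V} {v : V}, IsWalk E s v l →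
    mdist E f s v ≤ wsum (wcan E f s) l := by
  intro l
  induction l using List.reverseRecOn with
  | nil => exact fun h => absurd rfl (isWalk_ne_nil h)
  | append_singleton l c ih =>
    intro v h
    rcases walk_decomp h with ⟨h1, rfl⟩ | ⟨l', t, heq, hl', he⟩
    · rw [h1, mdist_self]; exact Nat.zero_le _
    · have hll : l = l' := by
        have := congrArg List.dropLast heq; simpa using this
      have hc : c = v := by simpa using h.2.2
      subst hll; subst hc
      have ht := reach_of_walk hl'
      have ihm : mdist E f s t ≤ wsum (wcan E f s) l := ih hl'
      have h1 : mdist E f s c ≤ f (t, c) (mdist E f s t) := mdist_le_edge he ht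
      have h2 : mdist E f s t + 1 ≤ f (t, c) (mdist E f s t) := hpos t c he _
      have h3 : wsum (wcan E f s) (l ++ [c]) = wsum (wcan E f s) l + wcan E f s t c :=
        wsum_append _ hl'.2.2 c
      have h4 : wcan E f s t c = f (t, c) (mdist E f s t) - mdist E f s t := rfl
      omega

include hpos hmono in
lemma ndist_wcan_le : ∀ n : ℕ, ∀ v : V, Relation.ReflTransGen E s v →
    mdist E f s v = n → ndist E (wcan E f s) s v ≤ n := by
  intro n
  induction n using Nat.strong_induction_on with
  | _ n IH =>
    intro v hv hn
    rcases eq_or_ne v s with rfl | hvs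
    · rw [ndist_self]; exact Nat.zero_le n
    · obtain ⟨l, hl, hsum⟩ := exists_walk_mdist (f := f) hv
      rcases walk_decomp hl with ⟨_, h2⟩ | ⟨l', t, rfl, hl', he⟩
      · exact absurd h2 hvs
      · have ht := reach_of_walk hl'
        have hm1 : mdist E f s t ≤ mfold f l' := mdist_le_mfold hl'
        have hfold : mfold f (l' ++ [v]) = f (t, v) (mfold f l') :=
          mfold_append f hl'.2.2 v
        have hp0 := hpos t v he (mfold f l')
        have hlt : mdist E f s t < n := by omega
        have iht : ndist E (wcan E f s) s t ≤ mdist E f s t := IH _ hlt t ht rfl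
        have h2 : ndist E (wcan E f s) s v ≤ ndist E (wcan E f s) s t + wcan E f s t v :=
          ndist_le_edge he ht
        have h4 : wcan E f s t v = f (t, v) (mdist E f s t) - mdist E f s t := rfl
        have hp := hpos t v he (mdist E f s t)
        have hmm := hmono t v he _ _ hm1
        omega

include hpos hmono in
lemma ndist_wcan_eq (hv : Relation.ReflTransGen E s v) :
    ndist E (wcan E f s) s v = mdist E f s v := by
  refine le_antisymm (ndist_wcan_le hpos hmono _ v hv rfl) ?_
  obtain ⟨l, hl, hsum⟩ := exists_walk_ndist (w := wcan E f s) hv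
  rw [← hsum]
  exact mdist_le_wsum_wcan hpos hl

include hpos hmono in
lemma ndist_uniq_le
    (hw : ∀ a b, E a b → Relation.ReflTransGen E s a →
      w a b = f (a, b) (ndist E w s a) - ndist E w s a)
    (hw' : ∀ a b, E a b → Relation.ReflTransGen E s a →
      w' a b = f (a, b) (ndist E w' s a) - ndist E w' s a) :
    ∀ n : ℕ, ∀ v : V, Relation.ReflTransGen E s v →
      ndist E w s v = n → ndist E w' s v ≤ n := by
  intro n
  induction n using Nat.strong_induction_on with
  | _ n IH =>
    intro v hv hn
    rcases eq_or_ne v s with rfl | hvs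
    · rw [ndist_self]; exact Nat.zero_le n
    · obtain ⟨t, he, ht, hdec⟩ := ndist_decomp (w := w) hv hvs
      have hwt : w t v = f (t, v) (ndist E w s t) - ndist E w s t := hw t v he ht
      have hp := hpos t v he (ndist E w s t)
      have hlt : ndist E w s t < n := by omega
      have iht : ndist E w' s t ≤ ndist E w s t := IH _ hlt t ht rfl
      have h2 : ndist E w' s v ≤ ndist E w' s t + w' t v := ndist_le_edge he ht
      have hwt' : w' t v = f (t, v) (ndist E w' s t) - ndist E w' s t := hw' t v he ht
      have hp' := hpos t v he (ndist E w' s t)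
      have hmm := hmono t v he _ _ iht
      omega

end core

end Helpers

/-- existence, uniqueness and bounds for the flexible edge-weight function. -/
theorem stmt2 {V : Type*} [Fintype V] (s : V) (E : Set (V × V)) (k : ℕ)
    (ℓ : V × V → ℕ) (hℓ : ∀ e ∈ E, ℓ e ≤ k)
    (wM WM : ℕ → ℕ) (hwM : ∀ i ≤ k, 1 ≤ wM i) (hWM : ∀ i ≤ k, wM i ≤ WM i) :
    (∃ w : V × V → ℕ, FlexWeight s E ℓ wM WM w) ∧
    (∀ w w' : V × V → ℕ, FlexWeight s E ℓ wM WM w → FlexWeight s E ℓ wM WM w' →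
      ∀ e ∈ E, Relation.ReflTransGen (fun a b => (a, b) ∈ E) s e.1 → w e = w' e) ∧
    (∀ w : V × V → ℕ, FlexWeight s E ℓ wM WM w →
      ∀ e ∈ E, Relation.ReflTransGen (fun a b => (a, b) ∈ E) s e.1 →
        wM (ℓ e) ≤ w e ∧ w e ≤ WM (ℓ e)) := by

  set Er : V → V → Prop := fun a b => (a, b) ∈ E with hEr
  set f : V × V → ℕ → ℕ := fun e m => ceilTo (wM (ℓ e)) (WM (ℓ e)) m with hf
  have hpos : ∀ a b, Er a b → ∀ m, m + 1 ≤ f (a, b) m := by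
    intro a b hab m
    have h1 := hwM _ (hℓ (a, b) hab)
    have h2 := hWM _ (hℓ (a, b) hab)
    have := (ceilTo_mem h1 h2 m).1
    simp only [hf]; omega
  have hmono : ∀ a b, Er a b → ∀ m m', m ≤ m' → f (a, b) m ≤ f (a, b) m' := by
    intro a b hab m m' hmm
    exact ceilTo_mono (hwM _ (hℓ (a, b) hab)) (hWM _ (hℓ (a, b) hab)) hmm
  -- characterization of flex weights via ndist
  have hchar : ∀ w : V × V → ℕ, FlexWeight s E ℓ wM WM w →
      ∀ a b, Er a b → Relation.ReflTransGen Er s a →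
        w (a, b) = f (a, b) (ndist Er (fun a b => w (a, b)) s a)
          - ndist Er (fun a b => w (a, b)) s a := by
    intro w hw a b hab hra
    obtain ⟨m, hm1, hm2⟩ := hw (a, b) hab hra
    have := wdist_eq (w := fun a b => w (a, b)) hra
    rw [hm1] at this
    have hm : m = ndist Er (fun a b => w (a, b)) s a := by exact_mod_cast this
    rw [hm2, hm]
  refine ⟨?_, ?_, ?_⟩
  · -- existence
    refine ⟨fun e => wcan Er f s e.1 e.2, ?_⟩
    intro e he hre
    refine ⟨mdist Er f s e.1, ?_, ?_⟩
    · rw [wdist_eq (w := wcan Er f s) hre]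
      exact congrArg (fun n : ℕ => (n : ℕ∞)) (ndist_wcan_eq hpos hmono hre)
    · show wcan Er f s e.1 e.2 = _
      have : f (e.1, e.2) (mdist Er f s e.1) = ceilTo (wM (ℓ e)) (WM (ℓ e)) (mdist Er f s e.1) := rfl
      simp only [wcan, this]
  · -- uniqueness
    intro w w' hw hw' e he hre
    have hc := hchar w hw
    have hc' := hchar w' hw'
    have h1 := ndist_uniq_le hpos hmono hc hc' (ndist Er (fun a b => w (a, b)) s e.1) e.1 hre rfl
    have h2 := ndist_uniq_le hpos hmono hc' hc (ndist Er (fun a b => w' (a, b)) s e.1) e.1 hre rfl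
    have heq : ndist Er (fun a b => w (a, b)) s e.1 = ndist Er (fun a b => w' (a, b)) s e.1 := by
      omega
    have e1 : w (e.1, e.2) = w' (e.1, e.2) := by
      rw [hc e.1 e.2 he hre, hc' e.1 e.2 he hre, heq]
    simpa using e1
  · -- bounds
    intro w hw e he hre
    obtain ⟨m, _, hm2⟩ := hw e he hre
    have h1 := hwM _ (hℓ e he)
    have h2 := hWM _ (hℓ e he)
    have h3 := (ceilTo_mem h1 h2 m).1
    have h4 := ceilTo_le h1 h2 m
    omega
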